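/- Every finite graph with no isolated vertex contains two disjoint dominating sets; equivalently, its vertex set can be partitioned into two dominating sets. -/

import Mathlib

open SimpleGraph

variable {V : Type*}

/-- `D` is a dominating set of `G`. -/
def Dominating (G : SimpleGraph V) (D : Set V) : Prop :=
  ∀ v ∉ D, ∃ u ∈ D, G.Adj v u

/-- `P` is a paired-dominating set of `G`: it is dominating and the induced
subgraph `G[P]` contains a perfect matching (given by an involutive pairing of
the vertices of `P` along edges inside `P`). -/
def PairedDominating (G : SimpleGraph V) (P : Set V) : Prop :=
  Dominating G P ∧ ∃ m : V → V, ∀ v ∈ P, m v ∈ P ∧ G.Adj v (m v) ∧ m (m v) = v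

/-- `(D, P)` is a DP-pair: a partition of the vertex set into a dominating set `D`
and a paired-dominating set `P`. -/
def IsDPPair (G : SimpleGraph V) (D P : Set V) : Prop :=
  Disjoint D P ∧ D ∪ P = Set.univ ∧ Dominating G D ∧ PairedDominating G P

/-- `G` is a DPDP-graph: its vertex set partitions into a dominating set and a
paired-dominating set. -/
def IsDPDP (G : SimpleGraph V) : Prop := ∃ D P, IsDPPair G D P

/-- A minimal DPDP-graph: a DPDP-graph no proper spanning subgraph of which is DPDP. -/
def IsMinimalDPDP (G : SimpleGraph V) : Prop :=
  IsDPDP G ∧ ∀ G' : SimpleGraph V, G' < G → ¬ IsDPDP G'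

/-- A leaf is a vertex of degree 1. -/
def IsLeaf (G : SimpleGraph V) (v : V) : Prop := (G.neighborSet v).ncard = 1

/-- A support vertex is a vertex adjacent to at least one leaf. -/
def IsSupport (G : SimpleGraph V) (v : V) : Prop := ∃ u, G.Adj v u ∧ IsLeaf G u

/-- Every finite graph with no isolated vertex contains two disjoint dominating
sets partitioning its vertex set. -/
theorem stmt0 {V : Type*} [Fintype V] (G : SimpleGraph V)
    (h : ∀ v : V, ∃ u, G.Adj v u) :
    ∃ D P : Set V, Disjoint D P ∧ D ∪ P = Set.univ ∧
      Dominating G D ∧ Dominating G P := by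
  classical
  -- take a maximal independent set D
  obtain ⟨D, hD, hmax'⟩ := Finset.exists_maximal (s :=
    ((Finset.univ : Finset (Finset V)).filter
      (fun s : Finset V => ∀ a ∈ s, ∀ b ∈ s, ¬ G.Adj a b)))
    ⟨∅, by simp⟩
  have hmax : ∀ x ∈ (Finset.univ : Finset (Finset V)).filter
      (fun s : Finset V => ∀ a ∈ s, ∀ b ∈ s, ¬ G.Adj a b), ¬ D < x :=
    fun x hx hlt => hlt.not_ge (hmax' hx hlt.le)
  simp only [Finset.mem_filter, Finset.mem_univ, true_and] at hD
  have hind : ∀ a ∈ D, ∀ b ∈ D, ¬ G.Adj a b := hD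
  have hdom : ∀ v ∉ D, ∃ u ∈ D, G.Adj v u := by
    intro v hv
    by_contra hno
    push_neg at hno
    have hins : ∀ a ∈ insert v D, ∀ b ∈ insert v D, ¬ G.Adj a b := by
      intro a ha b hb hadj
      rcases Finset.mem_insert.1 ha with rfl | ha'
      · rcases Finset.mem_insert.1 hb with rfl | hb'
        · exact G.loopless.irrefl _ hadj
        · exact hno b hb' hadj
      · rcases Finset.mem_insert.1 hb with rfl | hb'
        · exact hno a ha' hadj.symm
        · exact hind a ha' b hb' hadj
    exact hmax (insert v D)
      (by simp only [Finset.mem_filter, Finset.mem_univ, true_and]; exact hins)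
      (Finset.ssubset_insert hv)
  refine ⟨(D : Set V), ((D : Set V))ᶜ, disjoint_compl_right, Set.union_compl_self _,
    ?_, ?_⟩
  · intro v hv
    obtain ⟨u, hu, hadj⟩ := hdom v (by simpa using hv)
    exact ⟨u, by simpa using hu, hadj⟩
  · intro v hv
    have hvD : v ∈ D := by simpa using hv
    obtain ⟨u, hadj⟩ := h v
    have : u ∉ D := fun hu => hind v hvD u hu hadj
    exact ⟨u, by simpa using this, hadj⟩
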